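/- arXiv:math/0107212 — 2 statements merged into one kernel-verified Lean document; each statement's English description precedes it below -/
import Mathlib

section
/- Let L(x,v) be a smooth Lagrangian on U × ℝⁿ whose Legendre map λ(x,v) = (x, ∂L/∂v(x,v)) is a bijection of U × ℝⁿ onto U × ℝⁿ with smooth inverse, and let H be the Hamilton function. A C² curve t ↦ x(t) in U satisfies the Euler–Lagrange equations (d/dt)(∂L/∂v^k)(x(t),ẋ(t)) − (∂L/∂x^k)(x(t),ẋ(t)) = 0 if and only if the pair (x(t), p(t)), with p_k(t) = ∂L/∂v^k(x(t),ẋ(t)), satisfies the Hamilton equations ẋ^k = ∂H/∂p_k(x(t),p(t)) and ∇_t p_k = −∇_k H(x(t),p(t)), where ∇_t p_k = ṗ_k − Σ_{q,b} Γ^b_{qk}(x(t)) p_b ẋ^q and ∇_k H = ∂H/∂x^k + Σ_{a,b} p_a Γ^a_{kb}(x) ∂H/∂p_b. -/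
open Real Set
open scoped ContDiff

noncomputable section

abbrev Vec (n : ℕ) := Fin n → ℝ

/-- Partial derivative of an extended field `f(x,v)` with respect to `x^q`. -/
def pdx {n : ℕ} (f : Vec n × Vec n → ℝ) (q : Fin n) (p : Vec n × Vec n) : ℝ :=
  fderiv ℝ f p (Pi.single q 1, 0)

/-- Partial derivative of an extended field `f(x,v)` with respect to `v^k`. -/
def pdv {n : ℕ} (f : Vec n × Vec n → ℝ) (k : Fin n) (p : Vec n × Vec n) : ℝ :=
  fderiv ℝ f p (0, Pi.single k 1)

/-- Christoffel symbols `Γ^k_{ij}(x)` of a metric `g`. -/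
def Christoffel {n : ℕ} (g : Vec n → Matrix (Fin n) (Fin n) ℝ) (k i j : Fin n)
    (x : Vec n) : ℝ :=
  (1/2) * ∑ l, (g x)⁻¹ k l *
    (fderiv ℝ (fun y => g y l j) x (Pi.single i 1)
      + fderiv ℝ (fun y => g y l i) x (Pi.single j 1)
      - fderiv ℝ (fun y => g y i j) x (Pi.single l 1))

/-- `|v|`, the norm of `v` in the metric `g` at the point `x`. -/
def nrm {n : ℕ} (g : Vec n → Matrix (Fin n) (Fin n) ℝ) (x v : Vec n) : ℝ :=
  Real.sqrt (∑ i, ∑ j, g x i j * v i * v j)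

/-- Index lowering: `v_r = Σ_s g_{rs} v^s`. -/
def lower {n : ℕ} (g : Vec n → Matrix (Fin n) (Fin n) ℝ) (x v : Vec n) (r : Fin n) : ℝ :=
  ∑ s, g x r s * v s

/-- Spatial gradient `∇_q f` of an extended scalar field. -/
def sgrad {n : ℕ} (g : Vec n → Matrix (Fin n) (Fin n) ℝ) (f : Vec n × Vec n → ℝ)
    (q : Fin n) (p : Vec n × Vec n) : ℝ :=
  pdx f q p - ∑ a, ∑ b, p.2 a * Christoffel g b q a p.1 * pdv f b p

/-- Spatial gradient `∇_q X_j` of an extended covector field. -/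
def sgradCov {n : ℕ} (g : Vec n → Matrix (Fin n) (Fin n) ℝ) (X : Fin n → Vec n × Vec n → ℝ)
    (q j : Fin n) (p : Vec n × Vec n) : ℝ :=
  pdx (X j) q p - ∑ a, ∑ b, p.2 a * Christoffel g b q a p.1 * pdv (X j) b p
    - ∑ b, Christoffel g b q j p.1 * X b p

lemma clm_decomp {n : ℕ} (D : (Vec n × Vec n) →L[ℝ] ℝ) (a b : Vec n) :
    D (a, b) = (∑ q, a q * D (Pi.single q 1, 0)) + ∑ k, b k * D (0, Pi.single k 1) := by
  have h : (a, b) = (∑ q, a q • ((Pi.single q 1 : Vec n), (0 : Vec n)))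
      + ∑ k, b k • ((0 : Vec n), (Pi.single k 1 : Vec n)) := by
    ext j
    · simp [Prod.fst_sum, Finset.sum_apply, Pi.single_apply, mul_ite]
    · simp [Prod.snd_sum, Finset.sum_apply, Pi.single_apply, mul_ite]
  rw [h, map_add, map_sum, map_sum]
  congr 1 <;> (apply Finset.sum_congr rfl; intro q _; rw [map_smul]; simp)

lemma diffAt_of_contDiffOn {E F : Type*} [NormedAddCommGroup E] [NormedSpace ℝ E]
    [NormedAddCommGroup F] [NormedSpace ℝ F] {U : Set E} (hU : IsOpen U) {f : E → F}
    (hf : ContDiffOn ℝ ∞ f U) {x : E} (hx : x ∈ U) : DifferentiableAt ℝ f x :=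
  (hf.contDiffAt (hU.mem_nhds hx)).differentiableAt (by simp)

lemma hamDeriv {n : ℕ} (U : Set (Vec n)) (hU : IsOpen U)
    (L : Vec n × Vec n → ℝ) (hL : ContDiffOn ℝ ∞ L (U ×ˢ (univ : Set (Vec n))))
    (lam : Vec n × Vec n → Vec n × Vec n)
    (hlam : ∀ p : Vec n × Vec n, lam p = (p.1, fun k => pdv L k p))
    (hbij : Set.BijOn lam (U ×ˢ (univ : Set (Vec n))) (U ×ˢ (univ : Set (Vec n))))
    (mu : Vec n × Vec n → Vec n × Vec n)
    (hmu : ContDiffOn ℝ ∞ mu (U ×ˢ (univ : Set (Vec n))))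
    (hmu1 : ∀ p ∈ U ×ˢ (univ : Set (Vec n)), mu (lam p) = p)
    (hmu2 : ∀ p ∈ U ×ˢ (univ : Set (Vec n)), lam (mu p) = p)
    (H : Vec n × Vec n → ℝ)
    (hH : ∀ p : Vec n × Vec n, H p = (∑ k, (mu p).2 k * pdv L k (mu p)) - L (mu p))
    (P : Vec n × Vec n) (hP : P ∈ U ×ˢ (univ : Set (Vec n))) :
    (∀ k, pdv H k P = (mu P).2 k) ∧ (∀ k, pdx H k P = - pdx L k (mu P)) := by
  set W := U ×ˢ (univ : Set (Vec n)) with hWdef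
  have hW : IsOpen W := hU.prod isOpen_univ
  have hmuW : ∀ P' ∈ W, mu P' ∈ W := by
    intro P' hP'
    obtain ⟨q, hq, hlq⟩ := hbij.surjOn hP'
    rw [← hlq, hmu1 q hq]; exact hq
  have hsnd : ∀ P' ∈ W, ∀ k, pdv L k (mu P') = P'.2 k := by
    intro P' hP' k
    have h := (hlam (mu P')).symm.trans (hmu2 P' hP')
    exact congrFun (congrArg Prod.snd h) k
  have hfst0 : ∀ P' ∈ W, (mu P').1 = P'.1 := by
    intro P' hP'
    have h := (hlam (mu P')).symm.trans (hmu2 P' hP')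
    have := congrArg Prod.fst h
    simpa using this
  have hmu_diff : DifferentiableAt ℝ mu P := diffAt_of_contDiffOn hW hmu hP
  set Dmu := fderiv ℝ mu P with hDmu
  have hmu_fd : HasFDerivAt mu Dmu P := hmu_diff.hasFDerivAt
  set m := mu P with hm
  have hmW : m ∈ W := hmuW P hP
  have hLm : DifferentiableAt ℝ L m := diffAt_of_contDiffOn hW hL hmW
  -- first components
  have hfst : ∀ w : Vec n × Vec n, (Dmu w).1 = w.1 := by
    intro w
    have e1 : HasFDerivAt (fun P' => (mu P').1)
        ((ContinuousLinearMap.fst ℝ (Vec n) (Vec n)).comp Dmu) P :=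
      (ContinuousLinearMap.fst ℝ (Vec n) (Vec n)).hasFDerivAt.comp P hmu_fd
    have e2 : (fun P' : Vec n × Vec n => (mu P').1) =ᶠ[nhds P]
        (fun P' : Vec n × Vec n => P'.1) := by
      filter_upwards [hW.mem_nhds hP] with P' hP' using hfst0 P' hP'
    have e3 : fderiv ℝ (fun P' : Vec n × Vec n => (mu P').1) P
        = ContinuousLinearMap.fst ℝ (Vec n) (Vec n) := by
      rw [e2.fderiv_eq]
      exact (ContinuousLinearMap.fst ℝ (Vec n) (Vec n)).fderiv
    have := e1.fderiv.symm.trans e3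
    have := congrArg (fun (T : (Vec n × Vec n) →L[ℝ] Vec n) => T w) this
    simpa using this
  -- local form of H
  have hloc : H =ᶠ[nhds P] fun P' => (∑ k, (mu P').2 k * P'.2 k) - L (mu P') := by
    filter_upwards [hW.mem_nhds hP] with P' hP'
    rw [hH]
    congr 1
    exact Finset.sum_congr rfl fun k _ => by rw [hsnd P' hP' k]
  -- derivative of local form
  have Ek : Fin n → ((Vec n × Vec n) →L[ℝ] ℝ) := fun k =>
    (ContinuousLinearMap.proj k).comp (ContinuousLinearMap.snd ℝ (Vec n) (Vec n))
  have hmulk : ∀ k : Fin n, HasFDerivAt (fun P' => (mu P').2 k * P'.2 k)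
      (m.2 k • ((ContinuousLinearMap.proj k).comp (ContinuousLinearMap.snd ℝ (Vec n) (Vec n)))
        + P.2 k • (((ContinuousLinearMap.proj k).comp
            (ContinuousLinearMap.snd ℝ (Vec n) (Vec n))).comp Dmu)) P := by
    intro k
    have h2k : HasFDerivAt (fun P' => (mu P').2 k)
        ((((ContinuousLinearMap.proj k).comp
          (ContinuousLinearMap.snd ℝ (Vec n) (Vec n)))).comp Dmu) P :=
      (((ContinuousLinearMap.proj k).comp
        (ContinuousLinearMap.snd ℝ (Vec n) (Vec n)))).hasFDerivAt.comp P hmu_fd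
    have h3k : HasFDerivAt (fun P' : Vec n × Vec n => P'.2 k)
        ((ContinuousLinearMap.proj k).comp (ContinuousLinearMap.snd ℝ (Vec n) (Vec n))) P :=
      (((ContinuousLinearMap.proj k).comp
        (ContinuousLinearMap.snd ℝ (Vec n) (Vec n)))).hasFDerivAt
    exact h2k.mul h3k
  have hsum : HasFDerivAt (fun P' => ∑ k, (mu P').2 k * P'.2 k)
      (∑ k, (m.2 k • ((ContinuousLinearMap.proj k).comp
          (ContinuousLinearMap.snd ℝ (Vec n) (Vec n)))
        + P.2 k • (((ContinuousLinearMap.proj k).comp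
            (ContinuousLinearMap.snd ℝ (Vec n) (Vec n))).comp Dmu))) P :=
    HasFDerivAt.fun_sum (fun k _ => hmulk k)
  have hLmu : HasFDerivAt (fun P' => L (mu P')) ((fderiv ℝ L m).comp Dmu) P :=
    (hLm.hasFDerivAt).comp P hmu_fd
  have hHfd := hsum.sub hLmu
  have hfderiv : fderiv ℝ H P = _ := hloc.fderiv_eq.trans hHfd.fderiv
  -- applied formula
  have key : ∀ w : Vec n × Vec n,
      fderiv ℝ H P w = (∑ j, m.2 j * w.2 j) - ∑ q, w.1 q * pdx L q m := by
    intro w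
    rw [hfderiv]
    have hLapp : (fderiv ℝ L m) (Dmu w)
        = (∑ q, (Dmu w).1 q * pdx L q m) + ∑ j, P.2 j * (Dmu w).2 j := by
      have h0 := clm_decomp (fderiv ℝ L m) (Dmu w).1 (Dmu w).2
      rw [show ((Dmu w).1, (Dmu w).2) = Dmu w from rfl] at h0
      rw [h0]
      congr 1
      refine Finset.sum_congr rfl fun j _ => ?_
      rw [show (fderiv ℝ L m) ((0 : Vec n), (Pi.single j 1 : Vec n)) = P.2 j from hsnd P hP j]
      ring
    simp only [ContinuousLinearMap.sub_apply, ContinuousLinearMap.sum_apply,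
      ContinuousLinearMap.add_apply, ContinuousLinearMap.smul_apply,
      ContinuousLinearMap.comp_apply, ContinuousLinearMap.coe_snd',
      ContinuousLinearMap.proj_apply, smul_eq_mul]
    rw [hLapp, hfst w, Finset.sum_add_distrib]
    ring
  constructor
  · intro k
    have := key (0, Pi.single k 1)
    simp only [pdv]
    rw [this]
    simp [Pi.single_apply, mul_ite]
  · intro k
    have := key (Pi.single k 1, 0)
    simp only [pdx]
    rw [this]
    simp only [Pi.single_apply]
    simp [ite_mul]
    rfl

lemma christoffel_symm {n : ℕ} {U : Set (Vec n)} (hU : IsOpen U)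
    (g : Vec n → Matrix (Fin n) (Fin n) ℝ) (hgpos : ∀ x ∈ U, (g x).PosDef)
    {x : Vec n} (hx : x ∈ U) (k i j : Fin n) :
    Christoffel g k i j x = Christoffel g k j i x := by
  unfold Christoffel
  congr 1
  refine Finset.sum_congr rfl fun l _ => ?_
  have hfd : fderiv ℝ (fun y => g y i j) x = fderiv ℝ (fun y => g y j i) x := by
    apply Filter.EventuallyEq.fderiv_eq
    filter_upwards [hU.mem_nhds hx] with y hy
    have := Matrix.IsHermitian.apply (hgpos y hy).isHermitian j i
    simpa using this
  rw [hfd]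
  ring


/-- A C² curve satisfies the Euler–Lagrange equations iff the pair
`(x(t), p(t))` with `p_k = ∂L/∂v^k(x,ẋ)` satisfies the Hamilton equations
`ẋ^k = ∂H/∂p_k` and `∇_t p_k = −∇_k H`. -/
theorem stmt_9 {n : ℕ} (U : Set (Vec n)) (hU : IsOpen U)
    (g : Vec n → Matrix (Fin n) (Fin n) ℝ)
    (hgsmooth : ∀ i j, ContDiffOn ℝ ∞ (fun x => g x i j) U)
    (hgpos : ∀ x ∈ U, (g x).PosDef)
    (L : Vec n × Vec n → ℝ) (hL : ContDiffOn ℝ ∞ L (U ×ˢ (univ : Set (Vec n))))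
    (lam : Vec n × Vec n → Vec n × Vec n)
    (hlam : ∀ p : Vec n × Vec n, lam p = (p.1, fun k => pdv L k p))
    (hbij : Set.BijOn lam (U ×ˢ (univ : Set (Vec n))) (U ×ˢ (univ : Set (Vec n))))
    (mu : Vec n × Vec n → Vec n × Vec n)
    (hmu : ContDiffOn ℝ ∞ mu (U ×ˢ (univ : Set (Vec n))))
    (hmu1 : ∀ p ∈ U ×ˢ (univ : Set (Vec n)), mu (lam p) = p)
    (hmu2 : ∀ p ∈ U ×ˢ (univ : Set (Vec n)), lam (mu p) = p)
    (H : Vec n × Vec n → ℝ)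
    (hH : ∀ p : Vec n × Vec n, H p = (∑ k, (mu p).2 k * pdv L k (mu p)) - L (mu p))
    (x : ℝ → Vec n) (hx : ContDiff ℝ 2 x) (hxU : ∀ t, x t ∈ U)
    (p : ℝ → Fin n → ℝ) (hp : ∀ t k, p t k = pdv L k (x t, deriv x t)) :
    (∀ t : ℝ, ∀ k : Fin n,
        deriv (fun s => pdv L k (x s, deriv x s)) t - pdx L k (x t, deriv x t) = 0)
      ↔
    (∀ t : ℝ, ∀ k : Fin n,
        deriv x t k = pdv H k (x t, p t) ∧
        deriv (fun s => p s k) t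
            - ∑ q, ∑ b, Christoffel g b q k (x t) * p t b * deriv x t q
          = -(pdx H k (x t, p t)
              + ∑ a, ∑ b, p t a * Christoffel g a k b (x t) * pdv H b (x t, p t))) := by
  classical
  set W := U ×ˢ (univ : Set (Vec n)) with hWdef
  have key : ∀ t : ℝ, (∀ k, pdv H k (x t, p t) = deriv x t k)
      ∧ (∀ k, pdx H k (x t, p t) = - pdx L k (x t, deriv x t)) := by
    intro t
    have hin : ((x t, deriv x t) : Vec n × Vec n) ∈ W := ⟨hxU t, mem_univ _⟩
    have hPt : ((x t, p t) : Vec n × Vec n) = lam (x t, deriv x t) := by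
      rw [hlam]
      exact Prod.ext rfl (funext fun k => hp t k)
    have hPW : ((x t, p t) : Vec n × Vec n) ∈ W := by
      rw [hPt]; exact hbij.mapsTo hin
    have hmP : mu (x t, p t) = (x t, deriv x t) := by
      rw [hPt, hmu1 _ hin]
    obtain ⟨h1, h2⟩ := hamDeriv U hU L hL lam hlam hbij mu hmu hmu1 hmu2 H hH
      (x t, p t) hPW
    constructor
    · intro k; have := h1 k; rw [hmP] at this; exact this
    · intro k; have := h2 k; rw [hmP] at this; exact this
  have sumswap : ∀ t : ℝ, ∀ k : Fin n,
      ∑ q, ∑ b, Christoffel g b q k (x t) * p t b * deriv x t q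
        = ∑ a, ∑ b, p t a * Christoffel g a k b (x t) * deriv x t b := by
    intro t k
    rw [Finset.sum_comm]
    refine Finset.sum_congr rfl fun b _ => Finset.sum_congr rfl fun q _ => ?_
    rw [christoffel_symm hU g hgpos (hxU t) b q k]
    ring
  have hpk : ∀ k : Fin n, (fun s => p s k) = fun s => pdv L k (x s, deriv x s) :=
    fun k => funext fun s => hp s k
  have equiv : ∀ t : ℝ, ∀ k : Fin n,
      (deriv (fun s => pdv L k (x s, deriv x s)) t - pdx L k (x t, deriv x t) = 0)
        ↔ (deriv (fun s => p s k) t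
            - ∑ q, ∑ b, Christoffel g b q k (x t) * p t b * deriv x t q
          = -(pdx H k (x t, p t)
              + ∑ a, ∑ b, p t a * Christoffel g a k b (x t) * pdv H b (x t, p t))) := by
    intro t k
    obtain ⟨h1, h2⟩ := key t
    have hSw : ∑ a, ∑ b, p t a * Christoffel g a k b (x t) * pdv H b (x t, p t)
        = ∑ q, ∑ b, Christoffel g b q k (x t) * p t b * deriv x t q := by
      rw [sumswap t k]
      exact Finset.sum_congr rfl fun a _ => Finset.sum_congr rfl fun b _ => by
        rw [h1 b]
    rw [hpk k, h2 k, hSw]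
    constructor <;> intro h <;> linarith
  constructor
  · intro hEL t k
    exact ⟨((key t).1 k).symm, (equiv t k).mp (hEL t k)⟩
  · intro hHam t k
    exact (equiv t k).mpr ((hHam t k).2)
end
end

section
/- Let L be a fiberwise spherically symmetric smooth Lagrangian on U × (ℝⁿ∖{0}) with L′ ≠ 0 and L″ ≠ 0 everywhere. Then the Euler–Lagrange force field of L — the unique extended covector field F satisfying Σ_s ∇̃_s∇̃_k L · F^s + Σ_s ∇_s∇̃_k L · v^s − ∇_k L = 0 (with F^s = Σ_r g^{sr} F_r) — is given explicitly by F_r = −Σ_s (∇_s L′/L″ − ∇_s L/(|v|·L″))·(v^s v_r/|v|) − |v|·Σ_s (∇_s L/L′)·(v^s v_r/|v|² − δ^s_r). -/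
open Real Set
open Topology Filter
open scoped ContDiff

noncomputable section

variable {n : ℕ} {U : Set (Vec n)} {g : Vec n → Matrix (Fin n) (Fin n) ℝ}

theorem gsymm (hgpos : ∀ x ∈ U, (g x).PosDef) {x : Vec n} (hx : x ∈ U) (i j : Fin n) :
    g x i j = g x j i := by
  have := congrFun (congrFun (hgpos x hx).isHermitian j) i
  simpa [Matrix.conjTranspose_apply] using this

theorem ginv (hgpos : ∀ x ∈ U, (g x).PosDef) {x : Vec n} (hx : x ∈ U) (k j : Fin n) :
    ∑ l, g x k l * (g x)⁻¹ l j = if k = j then 1 else 0 := by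
  have hdet : IsUnit (g x).det := isUnit_iff_ne_zero.mpr (ne_of_gt (hgpos x hx).det_pos)
  have := congrFun (congrFun (Matrix.mul_nonsing_inv (g x) hdet) k) j
  simpa [Matrix.mul_apply, Matrix.one_apply] using this

/-- contraction helper : `Σ_b (Σ_l g⁻¹_{bl} T_l) g_{bj} = T j` -/
theorem contract (hgpos : ∀ x ∈ U, (g x).PosDef) {x : Vec n} (hx : x ∈ U)
    (T : Fin n → ℝ) (j : Fin n) :
    ∑ b, (∑ l, (g x)⁻¹ b l * T l) * g x b j = T j := by
  have : ∑ b, (∑ l, (g x)⁻¹ b l * T l) * g x b j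
      = ∑ l, (∑ b, g x j b * (g x)⁻¹ b l) * T l := by
    calc ∑ b, (∑ l, (g x)⁻¹ b l * T l) * g x b j
        = ∑ b, ∑ l, g x j b * ((g x)⁻¹ b l) * T l := by
          apply Finset.sum_congr rfl; intro b _
          rw [Finset.sum_mul]; apply Finset.sum_congr rfl; intro l _
          rw [gsymm hgpos hx j b]; ring
      _ = ∑ l, ∑ b, g x j b * ((g x)⁻¹ b l) * T l := Finset.sum_comm
      _ = ∑ l, (∑ b, g x j b * (g x)⁻¹ b l) * T l := by
          apply Finset.sum_congr rfl; intro l _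
          rw [Finset.sum_mul]
  rw [this]
  have : ∀ l, (∑ b, g x j b * (g x)⁻¹ b l) * T l = (if j = l then 1 else 0) * T l := by
    intro l; rw [ginv hgpos hx]
  rw [Finset.sum_congr rfl (fun l _ => this l)]
  simp

theorem dgsymm (hU : IsOpen U) (hgpos : ∀ x ∈ U, (g x).PosDef) {x : Vec n} (hx : x ∈ U)
    (i j : Fin n) : fderiv ℝ (fun y => g y i j) x = fderiv ℝ (fun y => g y j i) x := by
  apply Filter.EventuallyEq.fderiv_eq
  filter_upwards [hU.mem_nhds hx] with y hy using gsymm hgpos hy i j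

theorem compat (hU : IsOpen U) (hgpos : ∀ x ∈ U, (g x).PosDef) {x : Vec n} (hx : x ∈ U)
    (q i j : Fin n) :
    fderiv ℝ (fun y => g y i j) x (Pi.single q 1)
      = ∑ b, (Christoffel g b q i x * g x b j + g x i b * Christoffel g b q j x) := by
  rw [Finset.sum_add_distrib]
  have h1 : ∑ b, Christoffel g b q i x * g x b j
      = (1/2) * (fderiv ℝ (fun y => g y j i) x (Pi.single q 1)
          + fderiv ℝ (fun y => g y j q) x (Pi.single i 1)
          - fderiv ℝ (fun y => g y q i) x (Pi.single j 1)) := by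
    unfold Christoffel
    have := contract hgpos hx (fun l =>
      (fderiv ℝ (fun y => g y l i) x (Pi.single q 1)
        + fderiv ℝ (fun y => g y l q) x (Pi.single i 1)
        - fderiv ℝ (fun y => g y q i) x (Pi.single l 1))) j
    rw [← this, Finset.mul_sum]
    apply Finset.sum_congr rfl; intro b _; ring
  have h2 : ∑ b, g x i b * Christoffel g b q j x
      = (1/2) * (fderiv ℝ (fun y => g y i j) x (Pi.single q 1)
          + fderiv ℝ (fun y => g y i q) x (Pi.single j 1)
          - fderiv ℝ (fun y => g y q j) x (Pi.single i 1)) := by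
    unfold Christoffel
    have := contract hgpos hx (fun l =>
      (fderiv ℝ (fun y => g y l j) x (Pi.single q 1)
        + fderiv ℝ (fun y => g y l q) x (Pi.single j 1)
        - fderiv ℝ (fun y => g y q j) x (Pi.single l 1))) i
    rw [← this, Finset.mul_sum]
    apply Finset.sum_congr rfl; intro b _
    rw [gsymm hgpos hx i b]; ring
  rw [h1, h2, dgsymm hU hgpos hx j i, dgsymm hU hgpos hx j q, dgsymm hU hgpos hx q i]
  ring
def Qf (g : Vec n → Matrix (Fin n) (Fin n) ℝ) (p : Vec n × Vec n) : ℝ :=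
  ∑ i, ∑ j, g p.1 i j * p.2 i * p.2 j

def lo (g : Vec n → Matrix (Fin n) (Fin n) ℝ) (k : Fin n) (p : Vec n × Vec n) : ℝ :=
  ∑ s, g p.1 k s * p.2 s

theorem gdiff (hU : IsOpen U) (hgsmooth : ∀ i j, ContDiffOn ℝ ∞ (fun x => g x i j) U)
    (i j : Fin n) {x : Vec n} (hx : x ∈ U) : DifferentiableAt ℝ (fun y => g y i j) x :=
  (((hgsmooth i j).differentiableOn (by norm_num)).differentiableAt (hU.mem_nhds hx))

theorem Q_has (hU : IsOpen U) (hgsmooth : ∀ i j, ContDiffOn ℝ ∞ (fun x => g x i j) U)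
    {p : Vec n × Vec n} (hx : p.1 ∈ U) :
    ∃ D : (Vec n × Vec n) →L[ℝ] ℝ, HasFDerivAt (Qf g) D p ∧ ∀ y : Vec n × Vec n,
      D y = ∑ i, ∑ j, (fderiv ℝ (fun x => g x i j) p.1 y.1 * p.2 i * p.2 j
        + g p.1 i j * y.2 i * p.2 j + g p.1 i j * p.2 i * y.2 j) := by
  have hg' : ∀ i j, HasFDerivAt (fun q : Vec n × Vec n => g q.1 i j)
      ((fderiv ℝ (fun y => g y i j) p.1).comp (ContinuousLinearMap.fst ℝ (Vec n) (Vec n))) p :=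
    fun i j => ((gdiff hU hgsmooth i j hx).hasFDerivAt).comp p hasFDerivAt_fst
  have hπ : ∀ i : Fin n, HasFDerivAt (fun q : Vec n × Vec n => q.2 i)
      ((ContinuousLinearMap.proj i).comp (ContinuousLinearMap.snd ℝ (Vec n) (Vec n))) p :=
    fun i => ((ContinuousLinearMap.proj i).comp (ContinuousLinearMap.snd ℝ (Vec n) (Vec n))).hasFDerivAt
  refine ⟨_, HasFDerivAt.fun_sum (fun i _ => HasFDerivAt.fun_sum (fun j _ =>
    (((hg' i j).mul (hπ i)).mul (hπ j)))), ?_⟩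
  intro y
  simp only [ContinuousLinearMap.sum_apply, ContinuousLinearMap.add_apply,
    ContinuousLinearMap.smul_apply, smul_eq_mul, ContinuousLinearMap.comp_apply,
    ContinuousLinearMap.coe_fst', ContinuousLinearMap.coe_snd', ContinuousLinearMap.proj_apply,
    Pi.mul_apply]
  refine Finset.sum_congr rfl fun i _ => Finset.sum_congr rfl fun j _ => by ring

theorem lo_has (hU : IsOpen U) (hgsmooth : ∀ i j, ContDiffOn ℝ ∞ (fun x => g x i j) U)
    (k : Fin n) {p : Vec n × Vec n} (hx : p.1 ∈ U) :
    ∃ D : (Vec n × Vec n) →L[ℝ] ℝ, HasFDerivAt (lo g k) D p ∧ ∀ y : Vec n × Vec n,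
      D y = ∑ s, (fderiv ℝ (fun x => g x k s) p.1 y.1 * p.2 s + g p.1 k s * y.2 s) := by
  have hg' : ∀ i j, HasFDerivAt (fun q : Vec n × Vec n => g q.1 i j)
      ((fderiv ℝ (fun y => g y i j) p.1).comp (ContinuousLinearMap.fst ℝ (Vec n) (Vec n))) p :=
    fun i j => ((gdiff hU hgsmooth i j hx).hasFDerivAt).comp p hasFDerivAt_fst
  have hπ : ∀ i : Fin n, HasFDerivAt (fun q : Vec n × Vec n => q.2 i)
      ((ContinuousLinearMap.proj i).comp (ContinuousLinearMap.snd ℝ (Vec n) (Vec n))) p :=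
    fun i => ((ContinuousLinearMap.proj i).comp (ContinuousLinearMap.snd ℝ (Vec n) (Vec n))).hasFDerivAt
  refine ⟨_, HasFDerivAt.fun_sum (fun s _ => (hg' k s).mul (hπ s)), ?_⟩
  intro y
  simp only [ContinuousLinearMap.sum_apply, ContinuousLinearMap.add_apply,
    ContinuousLinearMap.smul_apply, smul_eq_mul, ContinuousLinearMap.comp_apply,
    ContinuousLinearMap.coe_fst', ContinuousLinearMap.coe_snd', ContinuousLinearMap.proj_apply]
  refine Finset.sum_congr rfl fun s _ => by ring
def xi1 (ξ : Vec n × ℝ → ℝ) (q : Vec n × ℝ) : ℝ := fderiv ℝ ξ q (0, 1)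
def xi2 (ξ : Vec n × ℝ → ℝ) (q : Vec n × ℝ) : ℝ := fderiv ℝ (xi1 ξ) q (0, 1)

theorem slice_deriv (hU : IsOpen U) {F : Vec n × ℝ → ℝ}
    (hF : ContDiffOn ℝ ∞ F (U ×ˢ Ioi (0:ℝ))) {x : Vec n} {w0 : ℝ}
    (hx : x ∈ U) (hw : 0 < w0) :
    HasDerivAt (fun w => F (x, w)) (fderiv ℝ F (x, w0) (0, 1)) w0 := by
  have hopen : IsOpen (U ×ˢ Ioi (0:ℝ)) := hU.prod isOpen_Ioi
  have hd : DifferentiableAt ℝ F (x, w0) :=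
    (hF.differentiableOn (by norm_num)).differentiableAt (hopen.mem_nhds ⟨hx, hw⟩)
  have hc : HasDerivAt (fun w : ℝ => ((x, w) : Vec n × ℝ)) ((0:Vec n), (1:ℝ)) w0 :=
    (hasDerivAt_const w0 x).prodMk (hasDerivAt_id w0)
  exact hd.hasFDerivAt.comp_hasDerivAt w0 hc

theorem xi1_smooth (hU : IsOpen U) {ξ : Vec n × ℝ → ℝ}
    (hξ : ContDiffOn ℝ ∞ ξ (U ×ˢ Ioi (0:ℝ))) :
    ContDiffOn ℝ ∞ (xi1 ξ) (U ×ˢ Ioi (0:ℝ)) := by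
  have hopen : IsOpen (U ×ˢ Ioi (0:ℝ)) := hU.prod isOpen_Ioi
  exact (hξ.fderiv_of_isOpen hopen (by norm_num)).clm_apply contDiffOn_const

theorem lpp_slice (hU : IsOpen U) {ξ : Vec n × ℝ → ℝ}
    (hξ : ContDiffOn ℝ ∞ ξ (U ×ˢ Ioi (0:ℝ))) {x : Vec n} {w0 : ℝ}
    (hx : x ∈ U) (hw : 0 < w0) :
    deriv (deriv (fun w => ξ (x, w))) w0 = xi2 ξ (x, w0) := by
  have hev : deriv (fun w => ξ (x, w)) =ᶠ[𝓝 w0] fun w => xi1 ξ (x, w) := by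
    filter_upwards [isOpen_Ioi.mem_nhds hw] with w hw'
    exact (slice_deriv hU hξ hx hw').deriv
  rw [hev.deriv_eq]
  exact (slice_deriv hU (xi1_smooth hU hξ) hx hw).deriv

theorem Qpos (hgpos : ∀ x ∈ U, (g x).PosDef) {p : Vec n × Vec n}
    (hp1 : p.1 ∈ U) (hp2 : p.2 ≠ 0) : 0 < Qf g p := by
  have := (hgpos p.1 hp1).dotProduct_mulVec_pos hp2
  simp [dotProduct, Matrix.mulVec, Finset.mul_sum] at this
  unfold Qf
  refine lt_of_lt_of_eq this ?_
  exact Finset.sum_congr rfl fun i _ => Finset.sum_congr rfl fun j _ => by ring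

theorem nrm_eq (p : Vec n × Vec n) : nrm g p.1 p.2 = Real.sqrt (Qf g p) := rfl

theorem nrm_pos (hgpos : ∀ x ∈ U, (g x).PosDef) {p : Vec n × Vec n}
    (hp1 : p.1 ∈ U) (hp2 : p.2 ≠ 0) : 0 < nrm g p.1 p.2 := by
  rw [nrm_eq]; exact Real.sqrt_pos.mpr (Qpos hgpos hp1 hp2)

theorem nrm_sq (hgpos : ∀ x ∈ U, (g x).PosDef) {p : Vec n × Vec n}
    (hp1 : p.1 ∈ U) (hp2 : p.2 ≠ 0) : nrm g p.1 p.2 ^ 2 = Qf g p := by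
  rw [nrm_eq, sq]; exact Real.mul_self_sqrt (Qpos hgpos hp1 hp2).le

theorem N_has (hU : IsOpen U) (hgsmooth : ∀ i j, ContDiffOn ℝ ∞ (fun x => g x i j) U)
    (hgpos : ∀ x ∈ U, (g x).PosDef) {p : Vec n × Vec n} (hp1 : p.1 ∈ U) (hp2 : p.2 ≠ 0) :
    ∃ D : (Vec n × Vec n) →L[ℝ] ℝ, HasFDerivAt (fun q : Vec n × Vec n => nrm g q.1 q.2) D p ∧
      ∀ y : Vec n × Vec n,
        D y = (∑ i, ∑ j, (fderiv ℝ (fun x => g x i j) p.1 y.1 * p.2 i * p.2 j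
          + g p.1 i j * y.2 i * p.2 j + g p.1 i j * p.2 i * y.2 j)) / (2 * nrm g p.1 p.2) := by
  obtain ⟨D, hD, hDe⟩ := Q_has hU hgsmooth hp1
  have hQ0 : Qf g p ≠ 0 := (Qpos hgpos hp1 hp2).ne'
  have hs : HasDerivAt Real.sqrt (1 / (2 * Real.sqrt (Qf g p))) (Qf g p) :=
    Real.hasDerivAt_sqrt hQ0
  refine ⟨_, hs.comp_hasFDerivAt p hD, ?_⟩
  intro y
  rw [ContinuousLinearMap.smul_apply, hDe, smul_eq_mul, nrm_eq]
  ring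

theorem evalv_Q (hgpos : ∀ x ∈ U, (g x).PosDef) {p : Vec n × Vec n} (hp1 : p.1 ∈ U)
    (s : Fin n) :
    ∑ i, ∑ j, (fderiv ℝ (fun x => g x i j) p.1 (0:Vec n) * p.2 i * p.2 j
      + g p.1 i j * (Pi.single s 1 : Vec n) i * p.2 j
      + g p.1 i j * p.2 i * (Pi.single s 1 : Vec n) j)
      = 2 * lo g s p := by
  have h0 : ∀ i j, fderiv ℝ (fun x => g x i j) p.1 (0:Vec n) = 0 := fun i j => map_zero _
  simp only [h0, zero_mul, zero_add]
  have hA : ∀ i, (∑ j, (g p.1 i j * (Pi.single s 1 : Vec n) i * p.2 j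
      + g p.1 i j * p.2 i * (Pi.single s 1 : Vec n) j))
      = (Pi.single s 1 : Vec n) i * (∑ j, g p.1 i j * p.2 j) + g p.1 i s * p.2 i := by
    intro i
    rw [Finset.sum_add_distrib]
    congr 1
    · rw [Finset.mul_sum]; exact Finset.sum_congr rfl fun j _ => by ring
    · simp [Pi.single_apply, mul_ite]
  rw [Finset.sum_congr rfl (fun i _ => hA i), Finset.sum_add_distrib]
  have hB : ∑ i, (Pi.single s 1 : Vec n) i * (∑ j, g p.1 i j * p.2 j)
      = ∑ j, g p.1 s j * p.2 j := by
    simp [Pi.single_apply, ite_mul]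
  have hC : ∑ i, g p.1 i s * p.2 i = ∑ j, g p.1 s j * p.2 j :=
    Finset.sum_congr rfl fun i _ => by rw [gsymm hgpos hp1 i s]
  rw [hB, hC]
  unfold lo
  ring

theorem evalv_lo (k s : Fin n) {p : Vec n × Vec n} :
    ∑ c, (fderiv ℝ (fun x => g x k c) p.1 (0:Vec n) * p.2 c
      + g p.1 k c * (Pi.single s 1 : Vec n) c) = g p.1 k s := by
  have h0 : ∀ c, fderiv ℝ (fun x => g x k c) p.1 (0:Vec n) = 0 := fun c => map_zero _
  simp [h0, Pi.single_apply, mul_ite]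

theorem comp_has (hU : IsOpen U) (hgsmooth : ∀ i j, ContDiffOn ℝ ∞ (fun x => g x i j) U)
    (hgpos : ∀ x ∈ U, (g x).PosDef) {F : Vec n × ℝ → ℝ}
    (hF : ContDiffOn ℝ ∞ F (U ×ˢ Ioi (0:ℝ))) {p : Vec n × Vec n}
    (hp1 : p.1 ∈ U) (hp2 : p.2 ≠ 0) :
    ∃ D : (Vec n × Vec n) →L[ℝ] ℝ,
      HasFDerivAt (fun q : Vec n × Vec n => F (q.1, nrm g q.1 q.2)) D p ∧
      ∀ s, D (0, Pi.single s 1)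
        = xi1 F (p.1, nrm g p.1 p.2) * (lo g s p / nrm g p.1 p.2) := by
  obtain ⟨DN, hDN, hDNe⟩ := N_has hU hgsmooth hgpos hp1 hp2
  have hφ : HasFDerivAt (fun q : Vec n × Vec n => (q.1, nrm g q.1 q.2))
      ((ContinuousLinearMap.fst ℝ (Vec n) (Vec n)).prod DN) p :=
    (hasFDerivAt_fst).prodMk hDN
  have hmem : (p.1, nrm g p.1 p.2) ∈ U ×ˢ Ioi (0:ℝ) := ⟨hp1, nrm_pos hgpos hp1 hp2⟩
  have hopen : IsOpen (U ×ˢ Ioi (0:ℝ)) := hU.prod isOpen_Ioi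
  have hd : DifferentiableAt ℝ F (p.1, nrm g p.1 p.2) :=
    (hF.differentiableOn (by norm_num)).differentiableAt (hopen.mem_nhds hmem)
  refine ⟨_, hd.hasFDerivAt.comp p hφ, ?_⟩
  intro s
  have hDNs : DN (0, Pi.single s 1) = lo g s p / nrm g p.1 p.2 := by
    rw [hDNe]
    dsimp only
    rw [evalv_Q hgpos hp1 s, mul_div_mul_left _ _ two_ne_zero]
  rw [ContinuousLinearMap.comp_apply, ContinuousLinearMap.prod_apply]
  simp only [ContinuousLinearMap.coe_fst', hDNs]
  have hsm : ((0:Vec n), lo g s p / nrm g p.1 p.2)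
      = (lo g s p / nrm g p.1 p.2) • ((0:Vec n), (1:ℝ)) := by
    simp
  rw [hsm, map_smul]
  simp [xi1, smul_eq_mul, mul_comm]

variable {ξ : Vec n × ℝ → ℝ} {L Lp Lpp : Vec n × Vec n → ℝ}

theorem Lp_eq (hU : IsOpen U) (hgpos : ∀ x ∈ U, (g x).PosDef)
    (hξ : ContDiffOn ℝ ∞ ξ (U ×ˢ Ioi (0:ℝ)))
    (hLp : ∀ p : Vec n × Vec n, Lp p = deriv (fun w => ξ (p.1, w)) (nrm g p.1 p.2))
    {p : Vec n × Vec n} (hp1 : p.1 ∈ U) (hp2 : p.2 ≠ 0) :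
    Lp p = xi1 ξ (p.1, nrm g p.1 p.2) := by
  rw [hLp p]
  exact (slice_deriv hU hξ hp1 (nrm_pos hgpos hp1 hp2)).deriv

theorem Lpp_eq (hU : IsOpen U) (hgpos : ∀ x ∈ U, (g x).PosDef)
    (hξ : ContDiffOn ℝ ∞ ξ (U ×ˢ Ioi (0:ℝ)))
    (hLpp : ∀ p : Vec n × Vec n, Lpp p = deriv (deriv (fun w => ξ (p.1, w))) (nrm g p.1 p.2))
    {p : Vec n × Vec n} (hp1 : p.1 ∈ U) (hp2 : p.2 ≠ 0) :
    Lpp p = xi2 ξ (p.1, nrm g p.1 p.2) := by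
  rw [hLpp p]
  exact lpp_slice hU hξ hp1 (nrm_pos hgpos hp1 hp2)

theorem mem_omega {p : Vec n × Vec n} (hp1 : p.1 ∈ U) (hp2 : p.2 ≠ 0) :
    p ∈ U ×ˢ ({0}ᶜ : Set (Vec n)) := ⟨hp1, hp2⟩

theorem omega_nhds (hU : IsOpen U) {p : Vec n × Vec n} (hp1 : p.1 ∈ U) (hp2 : p.2 ≠ 0) :
    (U ×ˢ ({0}ᶜ : Set (Vec n))) ∈ 𝓝 p :=
  (hU.prod isOpen_compl_singleton).mem_nhds (mem_omega hp1 hp2)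

theorem P1 (hU : IsOpen U) (hgsmooth : ∀ i j, ContDiffOn ℝ ∞ (fun x => g x i j) U)
    (hgpos : ∀ x ∈ U, (g x).PosDef) (hξ : ContDiffOn ℝ ∞ ξ (U ×ˢ Ioi (0:ℝ)))
    (hL : ∀ x ∈ U, ∀ v : Vec n, v ≠ 0 → L (x, v) = ξ (x, nrm g x v))
    (hLp : ∀ p : Vec n × Vec n, Lp p = deriv (fun w => ξ (p.1, w)) (nrm g p.1 p.2))
    {p : Vec n × Vec n} (hp1 : p.1 ∈ U) (hp2 : p.2 ≠ 0) (k : Fin n) :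
    pdv L k p = Lp p * (lo g k p / nrm g p.1 p.2) := by
  obtain ⟨D, hD, hDe⟩ := comp_has hU hgsmooth hgpos hξ hp1 hp2
  have hev : L =ᶠ[𝓝 p] fun q : Vec n × Vec n => ξ (q.1, nrm g q.1 q.2) := by
    filter_upwards [omega_nhds hU hp1 hp2] with q hq
    have := hL q.1 hq.1 q.2 (by simpa using hq.2)
    rwa [Prod.mk.eta] at this
  unfold pdv
  rw [hev.fderiv_eq, hD.fderiv, hDe k, ← Lp_eq hU hgpos hξ hLp hp1 hp2]

theorem LpD (hU : IsOpen U) (hgsmooth : ∀ i j, ContDiffOn ℝ ∞ (fun x => g x i j) U)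
    (hgpos : ∀ x ∈ U, (g x).PosDef) (hξ : ContDiffOn ℝ ∞ ξ (U ×ˢ Ioi (0:ℝ)))
    (hLp : ∀ p : Vec n × Vec n, Lp p = deriv (fun w => ξ (p.1, w)) (nrm g p.1 p.2))
    (hLpp : ∀ p : Vec n × Vec n, Lpp p = deriv (deriv (fun w => ξ (p.1, w))) (nrm g p.1 p.2))
    {p : Vec n × Vec n} (hp1 : p.1 ∈ U) (hp2 : p.2 ≠ 0) :
    ∃ D : (Vec n × Vec n) →L[ℝ] ℝ, HasFDerivAt Lp D p ∧
      ∀ s, D (0, Pi.single s 1) = Lpp p * (lo g s p / nrm g p.1 p.2) := by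
  obtain ⟨D, hD, hDe⟩ := comp_has hU hgsmooth hgpos (xi1_smooth hU hξ) hp1 hp2
  have hev : Lp =ᶠ[𝓝 p] fun q : Vec n × Vec n => xi1 ξ (q.1, nrm g q.1 q.2) := by
    filter_upwards [omega_nhds hU hp1 hp2] with q hq
    exact Lp_eq hU hgpos hξ hLp hq.1 (by simpa using hq.2)
  refine ⟨D, hD.congr_of_eventuallyEq hev, fun s => ?_⟩
  rw [hDe s, show xi1 (xi1 ξ) = xi2 ξ from rfl, ← Lpp_eq hU hgpos hξ hLpp hp1 hp2]

theorem P5 (hU : IsOpen U) (hgsmooth : ∀ i j, ContDiffOn ℝ ∞ (fun x => g x i j) U)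
    (hgpos : ∀ x ∈ U, (g x).PosDef) (hξ : ContDiffOn ℝ ∞ ξ (U ×ˢ Ioi (0:ℝ)))
    (hLp : ∀ p : Vec n × Vec n, Lp p = deriv (fun w => ξ (p.1, w)) (nrm g p.1 p.2))
    (hLpp : ∀ p : Vec n × Vec n, Lpp p = deriv (deriv (fun w => ξ (p.1, w))) (nrm g p.1 p.2))
    {p : Vec n × Vec n} (hp1 : p.1 ∈ U) (hp2 : p.2 ≠ 0) (s : Fin n) :
    pdv Lp s p = Lpp p * (lo g s p / nrm g p.1 p.2) := by
  obtain ⟨D, hD, hDe⟩ := LpD hU hgsmooth hgpos hξ hLp hLpp hp1 hp2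
  unfold pdv
  rw [hD.fderiv, hDe s]

theorem P23 (hU : IsOpen U) (hgsmooth : ∀ i j, ContDiffOn ℝ ∞ (fun x => g x i j) U)
    (hgpos : ∀ x ∈ U, (g x).PosDef) (hξ : ContDiffOn ℝ ∞ ξ (U ×ˢ Ioi (0:ℝ)))
    (hL : ∀ x ∈ U, ∀ v : Vec n, v ≠ 0 → L (x, v) = ξ (x, nrm g x v))
    (hLp : ∀ p : Vec n × Vec n, Lp p = deriv (fun w => ξ (p.1, w)) (nrm g p.1 p.2))
    (hLpp : ∀ p : Vec n × Vec n, Lpp p = deriv (deriv (fun w => ξ (p.1, w))) (nrm g p.1 p.2))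
    {p : Vec n × Vec n} (hp1 : p.1 ∈ U) (hp2 : p.2 ≠ 0) (k : Fin n) :
    (∀ s, pdv (pdv L k) s p
        = Lpp p * (lo g s p * lo g k p / nrm g p.1 p.2 ^ 2)
          + Lp p * (g p.1 k s / nrm g p.1 p.2
            - lo g k p * lo g s p / nrm g p.1 p.2 ^ 3))
    ∧ (∀ q, pdx (pdv L k) q p
        = pdx Lp q p * (lo g k p / nrm g p.1 p.2)
          + Lp p * ((∑ c, fderiv ℝ (fun x => g x k c) p.1 (Pi.single q 1) * p.2 c)
              / nrm g p.1 p.2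
            - lo g k p * (∑ i, ∑ j, fderiv ℝ (fun x => g x i j) p.1 (Pi.single q 1)
                * p.2 i * p.2 j) / (2 * nrm g p.1 p.2 ^ 3))) := by
  obtain ⟨DL, hDL, hDLe⟩ := LpD hU hgsmooth hgpos hξ hLp hLpp hp1 hp2
  obtain ⟨Dlo, hDlo, hDloe⟩ := lo_has hU hgsmooth k hp1
  obtain ⟨DN, hDN, hDNe⟩ := N_has hU hgsmooth hgpos hp1 hp2
  set w := nrm g p.1 p.2 with hwdef
  have hwpos : 0 < w := nrm_pos hgpos hp1 hp2
  have hw : w ≠ 0 := hwpos.ne'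
  have hinv : HasFDerivAt (fun q : Vec n × Vec n => (nrm g q.1 q.2)⁻¹)
      ((-(w^2)⁻¹) • DN) p := (hasDerivAt_inv hw).comp_hasFDerivAt p hDN
  have hH : HasFDerivAt (fun q : Vec n × Vec n => Lp q * (lo g k q * (nrm g q.1 q.2)⁻¹))
      (Lp p • ((lo g k p) • ((-(w^2)⁻¹) • DN) + (w⁻¹) • Dlo) + (lo g k p * w⁻¹) • DL) p := by
    have := hDL.mul (hDlo.mul hinv)
    convert this using 2
    all_goals rfl
  have hev : pdv L k =ᶠ[𝓝 p] (fun q => Lp q * (lo g k q * (nrm g q.1 q.2)⁻¹)) := by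
    filter_upwards [omega_nhds hU hp1 hp2] with q hq
    rw [P1 hU hgsmooth hgpos hξ hL hLp hq.1 (by simpa using hq.2) k, div_eq_mul_inv]
  have hfd : fderiv ℝ (pdv L k) p
      = Lp p • ((lo g k p) • ((-(w^2)⁻¹) • DN) + (w⁻¹) • Dlo) + (lo g k p * w⁻¹) • DL := by
    rw [hev.fderiv_eq, hH.fderiv]
  constructor
  · intro s
    have hDNs : DN (0, Pi.single s 1) = lo g s p / w := by
      rw [hDNe]; dsimp only
      rw [evalv_Q hgpos hp1 s, hwdef, mul_div_mul_left _ _ two_ne_zero]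
    have hDlos : Dlo (0, Pi.single s 1) = g p.1 k s := by
      rw [hDloe]; dsimp only; exact evalv_lo k s
    rw [show pdv (pdv L k) s p = fderiv ℝ (pdv L k) p (0, Pi.single s 1) from rfl, hfd]
    simp only [ContinuousLinearMap.add_apply, ContinuousLinearMap.smul_apply, smul_eq_mul,
      hDNs, hDlos, hDLe s]
    field_simp
    ring
  · intro q
    have hDNq : DN (Pi.single q 1, 0)
        = (∑ i, ∑ j, fderiv ℝ (fun x => g x i j) p.1 (Pi.single q 1) * p.2 i * p.2 j)
          / (2 * w) := by
      rw [hDNe]; dsimp only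
      congr 1
      refine Finset.sum_congr rfl fun i _ => Finset.sum_congr rfl fun j _ => by
        simp
    have hDloq : Dlo (Pi.single q 1, 0)
        = ∑ c, fderiv ℝ (fun x => g x k c) p.1 (Pi.single q 1) * p.2 c := by
      rw [hDloe]; dsimp only
      refine Finset.sum_congr rfl fun c _ => by simp
    have hpdxLp : pdx Lp q p = DL (Pi.single q 1, 0) := by
      unfold pdx; rw [hDL.fderiv]
    rw [show pdx (pdv L k) q p = fderiv ℝ (pdv L k) p (Pi.single q 1, 0) from rfl, hfd]
    simp only [ContinuousLinearMap.add_apply, ContinuousLinearMap.smul_apply, smul_eq_mul,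
      hDNq, hDloq]
    rw [hpdxLp]
    field_simp
    ring

theorem covP (hU : IsOpen U) (hgsmooth : ∀ i j, ContDiffOn ℝ ∞ (fun x => g x i j) U)
    (hgpos : ∀ x ∈ U, (g x).PosDef) (hξ : ContDiffOn ℝ ∞ ξ (U ×ˢ Ioi (0:ℝ)))
    (hL : ∀ x ∈ U, ∀ v : Vec n, v ≠ 0 → L (x, v) = ξ (x, nrm g x v))
    (hLp : ∀ p : Vec n × Vec n, Lp p = deriv (fun w => ξ (p.1, w)) (nrm g p.1 p.2))
    (hLpp : ∀ p : Vec n × Vec n, Lpp p = deriv (deriv (fun w => ξ (p.1, w))) (nrm g p.1 p.2))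
    {p : Vec n × Vec n} (hp1 : p.1 ∈ U) (hp2 : p.2 ≠ 0) (s k : Fin n) :
    sgradCov g (fun i => pdv L i) s k p = sgrad g Lp s p * (lo g k p / nrm g p.1 p.2) := by
  obtain ⟨h2, h3⟩ := P23 hU hgsmooth hgpos hξ hL hLp hLpp hp1 hp2 k
  set w := nrm g p.1 p.2 with hwdef
  have hwpos : 0 < w := nrm_pos hgpos hp1 hp2
  have hw : w ≠ 0 := hwpos.ne'
  set T1 : ℝ := ∑ b, Christoffel g b s k p.1 * lo g b p with hT1
  set T2 : ℝ := ∑ a, ∑ b, p.2 a * Christoffel g b s a p.1 * g p.1 k b with hT2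
  set T3 : ℝ := ∑ a, ∑ b, p.2 a * Christoffel g b s a p.1 * lo g b p with hT3
  -- identity 1
  have id1 : ∑ c, fderiv ℝ (fun x => g x k c) p.1 (Pi.single s 1) * p.2 c = T1 + T2 := by
    have step1 : ∑ c, fderiv ℝ (fun x => g x k c) p.1 (Pi.single s 1) * p.2 c
        = ∑ c, ∑ b, (Christoffel g b s k p.1 * (g p.1 b c * p.2 c)
            + p.2 c * Christoffel g b s c p.1 * g p.1 k b) := by
      refine Finset.sum_congr rfl fun c _ => ?_
      rw [compat hU hgpos hp1 s k c, Finset.sum_mul]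
      exact Finset.sum_congr rfl fun b _ => by ring
    rw [step1, Finset.sum_comm]
    rw [Finset.sum_congr rfl (fun b (_ : b ∈ Finset.univ) => Finset.sum_add_distrib)]
    rw [Finset.sum_add_distrib]
    congr 1
    · refine Finset.sum_congr rfl fun b _ => ?_
      rw [← Finset.mul_sum]
      rfl
    · rw [hT2, Finset.sum_comm]
  -- identity 2
  have id2 : ∑ i, ∑ j, fderiv ℝ (fun x => g x i j) p.1 (Pi.single s 1) * p.2 i * p.2 j
      = 2 * T3 := by
    have step1 : ∑ i, ∑ j, fderiv ℝ (fun x => g x i j) p.1 (Pi.single s 1) * p.2 i * p.2 j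
        = ∑ i, ∑ j, ∑ b, (Christoffel g b s i p.1 * (g p.1 b j * p.2 j) * p.2 i
            + p.2 j * Christoffel g b s j p.1 * (g p.1 i b * p.2 i)) := by
      refine Finset.sum_congr rfl fun i _ => Finset.sum_congr rfl fun j _ => ?_
      rw [compat hU hgpos hp1 s i j, Finset.sum_mul, Finset.sum_mul]
      exact Finset.sum_congr rfl fun b _ => by ring
    rw [step1]
    rw [Finset.sum_congr rfl (fun i (_ : i ∈ Finset.univ) =>
      Finset.sum_congr rfl (fun j (_ : j ∈ Finset.univ) => Finset.sum_add_distrib))]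
    rw [Finset.sum_congr rfl (fun i (_ : i ∈ Finset.univ) => Finset.sum_add_distrib)]
    rw [Finset.sum_add_distrib]
    have hA : ∑ i, ∑ j, ∑ b, Christoffel g b s i p.1 * (g p.1 b j * p.2 j) * p.2 i = T3 := by
      rw [hT3]
      refine Finset.sum_congr rfl fun i _ => ?_
      rw [Finset.sum_comm]
      refine Finset.sum_congr rfl fun b _ => ?_
      rw [show p.2 i * Christoffel g b s i p.1 * lo g b p
          = Christoffel g b s i p.1 * (∑ c, g p.1 b c * p.2 c) * p.2 i from by rw [lo]; ring,
        Finset.mul_sum, Finset.sum_mul]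
    have hB : ∑ i, ∑ j, ∑ b, p.2 j * Christoffel g b s j p.1 * (g p.1 i b * p.2 i) = T3 := by
      rw [Finset.sum_comm, hT3]
      refine Finset.sum_congr rfl fun j _ => ?_
      rw [Finset.sum_comm]
      refine Finset.sum_congr rfl fun b _ => ?_
      rw [show p.2 j * Christoffel g b s j p.1 * lo g b p
          = ∑ i, p.2 j * Christoffel g b s j p.1 * (g p.1 b i * p.2 i) from by
            rw [lo, Finset.mul_sum]]
      refine Finset.sum_congr rfl fun i _ => by rw [gsymm hgpos hp1 i b]; try ring
    rw [hA, hB]; ring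
  -- expand the covariant derivative
  unfold sgradCov sgrad
  rw [h3 s]
  have e1 : ∑ a, ∑ b, p.2 a * Christoffel g b s a p.1 * pdv (pdv L k) b p
      = T3 * (Lpp p * lo g k p / w^2) + T2 * (Lp p / w) - T3 * (Lp p * lo g k p / w^3) := by
    have : ∀ a b, p.2 a * Christoffel g b s a p.1 * pdv (pdv L k) b p
        = p.2 a * Christoffel g b s a p.1 * lo g b p * (Lpp p * lo g k p / w^2)
          + p.2 a * Christoffel g b s a p.1 * g p.1 k b * (Lp p / w)
          - p.2 a * Christoffel g b s a p.1 * lo g b p * (Lp p * lo g k p / w^3) := by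
      intro a b; rw [h2 b]; ring
    rw [Finset.sum_congr rfl (fun a (_ : a ∈ Finset.univ) =>
      Finset.sum_congr rfl (fun b (_ : b ∈ Finset.univ) => this a b))]
    simp only [Finset.sum_add_distrib, Finset.sum_sub_distrib, ← Finset.sum_mul]
    rfl
  have e2 : ∑ b, Christoffel g b s k p.1 * pdv L b p = T1 * (Lp p / w) := by
    have : ∀ b, Christoffel g b s k p.1 * pdv L b p
        = Christoffel g b s k p.1 * lo g b p * (Lp p / w) := by
      intro b; rw [P1 hU hgsmooth hgpos hξ hL hLp hp1 hp2 b]; ring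
    rw [Finset.sum_congr rfl (fun b (_ : b ∈ Finset.univ) => this b), ← Finset.sum_mul]
  have e5 : ∑ a, ∑ b, p.2 a * Christoffel g b s a p.1 * pdv Lp b p = T3 * (Lpp p / w) := by
    have : ∀ a b, p.2 a * Christoffel g b s a p.1 * pdv Lp b p
        = p.2 a * Christoffel g b s a p.1 * lo g b p * (Lpp p / w) := by
      intro a b; rw [P5 hU hgsmooth hgpos hξ hLp hLpp hp1 hp2 b]; ring
    rw [Finset.sum_congr rfl (fun a (_ : a ∈ Finset.univ) =>
      Finset.sum_congr rfl (fun b (_ : b ∈ Finset.univ) => this a b))]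
    simp only [← Finset.sum_mul]
    rfl
  rw [e1, e2, e5, id1, id2]
  field_simp
  ring

set_option maxHeartbeats 2000000 in
/-- For a fiberwise spherically symmetric Lagrangian `L(x,v) = ξ(x,|v|)`
with `L′ ≠ 0`, `L″ ≠ 0`, any covector field `F` solving the Euler–Lagrange force-field
equation `Σ_s ∇̃_s∇̃_k L · F^s + Σ_s ∇_s∇̃_k L · v^s − ∇_k L = 0` (with `F^s = Σ_r g^{sr}F_r`)
is given by formula (8.9):
`F_r = −Σ_s (∇_s L′/L″ − ∇_s L/(|v|·L″))·(v^s v_r/|v|) − |v|·Σ_s (∇_s L/L′)·(v^s v_r/|v|² − δ^s_r)`. -/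
theorem stmt_13 {n : ℕ} (U : Set (Vec n)) (hU : IsOpen U)
    (g : Vec n → Matrix (Fin n) (Fin n) ℝ)
    (hgsmooth : ∀ i j, ContDiffOn ℝ ∞ (fun x => g x i j) U)
    (hgpos : ∀ x ∈ U, (g x).PosDef)
    (ξ : Vec n × ℝ → ℝ) (hξ : ContDiffOn ℝ ∞ ξ (U ×ˢ Ioi (0:ℝ)))
    (L : Vec n × Vec n → ℝ)
    (hL : ∀ x ∈ U, ∀ v : Vec n, v ≠ 0 → L (x, v) = ξ (x, nrm g x v))
    -- the extended scalar fields `L′` and `L″`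
    (Lp Lpp : Vec n × Vec n → ℝ)
    (hLp : ∀ p : Vec n × Vec n, Lp p = deriv (fun w => ξ (p.1, w)) (nrm g p.1 p.2))
    (hLpp : ∀ p : Vec n × Vec n, Lpp p = deriv (deriv (fun w => ξ (p.1, w))) (nrm g p.1 p.2))
    (hLp0 : ∀ x ∈ U, ∀ v : Vec n, v ≠ 0 → Lp (x, v) ≠ 0)
    (hLpp0 : ∀ x ∈ U, ∀ v : Vec n, v ≠ 0 → Lpp (x, v) ≠ 0)
    (F : Fin n → Vec n × Vec n → ℝ)
    (hF : ∀ x ∈ U, ∀ v : Vec n, v ≠ 0 → ∀ k : Fin n,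
      (∑ s, pdv (pdv L k) s (x, v) * (∑ r, (g x)⁻¹ s r * F r (x, v)))
          + (∑ s, sgradCov g (fun i => pdv L i) s k (x, v) * v s)
          - sgrad g L k (x, v) = 0) :
    ∀ x ∈ U, ∀ v : Vec n, v ≠ 0 → ∀ r : Fin n,
      F r (x, v) =
        -(∑ s, (sgrad g Lp s (x, v) / Lpp (x, v)
              - sgrad g L s (x, v) / (nrm g x v * Lpp (x, v)))
            * (v s * lower g x v r / nrm g x v))
          - nrm g x v * ∑ s, (sgrad g L s (x, v) / Lp (x, v))
              * (v s * lower g x v r / (nrm g x v) ^ 2 - if s = r then 1 else 0) := by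
  intro x hx v hv r
  have hvv : ((x, v) : Vec n × Vec n).2 ≠ 0 := hv
  have hxx : ((x, v) : Vec n × Vec n).1 ∈ U := hx
  -- abbreviations
  have hwpos : 0 < nrm g x v := nrm_pos (p := ((x, v) : Vec n × Vec n)) hgpos hxx hvv
  -- derivative formulas transported to this point
  have h2 : ∀ k s : Fin n, pdv (pdv L k) s (x, v)
      = Lpp (x, v) * (lower g x v s * lower g x v k / nrm g x v ^ 2)
        + Lp (x, v) * (g x k s / nrm g x v
          - lower g x v k * lower g x v s / nrm g x v ^ 3) :=
    fun k s => (P23 (p := ((x, v) : Vec n × Vec n)) hU hgsmooth hgpos hξ hL hLp hLpp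
      hxx hvv k).1 s
  have hcov : ∀ s k : Fin n, sgradCov g (fun i => pdv L i) s k (x, v)
      = sgrad g Lp s (x, v) * (lower g x v k / nrm g x v) :=
    fun s k => covP (p := ((x, v) : Vec n × Vec n)) hU hgsmooth hgpos hξ hL hLp hLpp
      hxx hvv s k
  have fact0 : ∑ k, v k * lower g x v k = nrm g x v ^ 2 := by
    rw [nrm_sq (p := ((x, v) : Vec n × Vec n)) hgpos hxx hvv]
    unfold Qf _root_.lower
    refine Finset.sum_congr rfl fun k _ => ?_
    rw [Finset.mul_sum]
    exact Finset.sum_congr rfl fun j _ => by ring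
  set w := nrm g x v with hwdef
  have hw : w ≠ 0 := hwpos.ne'
  set l1 := Lp (x, v) with hl1def
  set l2 := Lpp (x, v) with hl2def
  have hl1 : l1 ≠ 0 := hLp0 x hx v hv
  have hl2 : l2 ≠ 0 := hLpp0 x hx v hv
  set S : ℝ := ∑ s, v s * sgrad g L s (x, v) with hSdef
  set S' : ℝ := ∑ s, v s * sgrad g Lp s (x, v) with hS'def
  set P : ℝ := ∑ t, v t * F t (x, v) with hPdef
  -- algebraic contraction facts
  have fact1 : ∀ k, ∑ s, g x k s * (∑ t, (g x)⁻¹ s t * F t (x, v)) = F k (x, v) := by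
    intro k
    have : ∑ s, g x k s * (∑ t, (g x)⁻¹ s t * F t (x, v))
        = ∑ t, (∑ s, g x k s * (g x)⁻¹ s t) * F t (x, v) := by
      calc ∑ s, g x k s * (∑ t, (g x)⁻¹ s t * F t (x, v))
          = ∑ s, ∑ t, g x k s * (g x)⁻¹ s t * F t (x, v) := by
            refine Finset.sum_congr rfl fun s _ => ?_
            rw [Finset.mul_sum]
            exact Finset.sum_congr rfl fun t _ => by ring
        _ = ∑ t, ∑ s, g x k s * (g x)⁻¹ s t * F t (x, v) := Finset.sum_comm
        _ = ∑ t, (∑ s, g x k s * (g x)⁻¹ s t) * F t (x, v) := by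
            refine Finset.sum_congr rfl fun t _ => ?_
            rw [Finset.sum_mul]
    rw [this]
    have : ∀ t, (∑ s, g x k s * (g x)⁻¹ s t) * F t (x, v)
        = (if k = t then (1:ℝ) else 0) * F t (x, v) := by
      intro t; rw [ginv hgpos hx k t]
    rw [Finset.sum_congr rfl fun t _ => this t]
    simp
  have fact2 : ∑ s, lower g x v s * (∑ t, (g x)⁻¹ s t * F t (x, v)) = P := by
    calc ∑ s, lower g x v s * (∑ t, (g x)⁻¹ s t * F t (x, v))
        = ∑ s, ∑ c, v c * (g x c s * (∑ t, (g x)⁻¹ s t * F t (x, v))) := by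
          refine Finset.sum_congr rfl fun s _ => ?_
          rw [_root_.lower, Finset.sum_mul]
          refine Finset.sum_congr rfl fun c _ => by rw [gsymm hgpos hx s c]; ring
      _ = ∑ c, v c * ∑ s, g x c s * (∑ t, (g x)⁻¹ s t * F t (x, v)) := by
          rw [Finset.sum_comm]
          exact Finset.sum_congr rfl fun c _ => by rw [Finset.mul_sum]
      _ = P := by
          rw [hPdef]
          exact Finset.sum_congr rfl fun c _ => by rw [fact1 c]
  -- the Euler-Lagrange equation in scalar form
  have eqk : ∀ k, l2 * lower g x v k * P / w ^ 2
      + l1 / w * F k (x, v) - l1 * lower g x v k * P / w ^ 3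
      + S' * (lower g x v k / w) - sgrad g L k (x, v) = 0 := by
    intro k
    have heq := hF x hx v hv k
    have t1 : ∑ s, pdv (pdv L k) s (x, v) * (∑ t, (g x)⁻¹ s t * F t (x, v))
        = l2 * lower g x v k * P / w ^ 2 + l1 / w * F k (x, v)
          - l1 * lower g x v k * P / w ^ 3 := by
      have hterm : ∀ s, pdv (pdv L k) s (x, v) * (∑ t, (g x)⁻¹ s t * F t (x, v))
          = (lower g x v s * (∑ t, (g x)⁻¹ s t * F t (x, v)))
              * (l2 * lower g x v k / w ^ 2)
            + (g x k s * (∑ t, (g x)⁻¹ s t * F t (x, v))) * (l1 / w)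
            - (lower g x v s * (∑ t, (g x)⁻¹ s t * F t (x, v)))
              * (l1 * lower g x v k / w ^ 3) := by
        intro s; rw [h2 k s]; ring
      rw [Finset.sum_congr rfl fun s _ => hterm s]
      simp only [Finset.sum_add_distrib, Finset.sum_sub_distrib, ← Finset.sum_mul]
      rw [fact2, fact1 k]
      ring
    have t2 : ∑ s, sgradCov g (fun i => pdv L i) s k (x, v) * v s
        = S' * (lower g x v k / w) := by
      have hterm : ∀ s, sgradCov g (fun i => pdv L i) s k (x, v) * v s
          = (v s * sgrad g Lp s (x, v)) * (lower g x v k / w) := by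
        intro s; rw [hcov s k]; ring
      rw [Finset.sum_congr rfl fun s _ => hterm s, ← Finset.sum_mul, ← hS'def]
    rw [t1, t2] at heq
    linarith [heq]
  -- contract with v to determine P
  have hP : l2 * P = S - w * S' := by
    have hsum : ∑ k, v k * (l2 * lower g x v k * P / w ^ 2
        + l1 / w * F k (x, v) - l1 * lower g x v k * P / w ^ 3
        + S' * (lower g x v k / w) - sgrad g L k (x, v)) = 0 := by
      rw [Finset.sum_congr rfl fun k _ => by rw [eqk k]]
      simp
    have hexp : ∑ k, v k * (l2 * lower g x v k * P / w ^ 2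
        + l1 / w * F k (x, v) - l1 * lower g x v k * P / w ^ 3
        + S' * (lower g x v k / w) - sgrad g L k (x, v))
        = (∑ k, v k * lower g x v k) * (l2 * P / w ^ 2)
          + (∑ k, v k * F k (x, v)) * (l1 / w)
          - (∑ k, v k * lower g x v k) * (l1 * P / w ^ 3)
          + (∑ k, v k * lower g x v k) * (S' / w) - S := by
      have hterm : ∀ k, v k * (l2 * lower g x v k * P / w ^ 2
          + l1 / w * F k (x, v) - l1 * lower g x v k * P / w ^ 3
          + S' * (lower g x v k / w) - sgrad g L k (x, v))
          = (v k * lower g x v k) * (l2 * P / w ^ 2)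
            + (v k * F k (x, v)) * (l1 / w)
            - (v k * lower g x v k) * (l1 * P / w ^ 3)
            + (v k * lower g x v k) * (S' / w) - v k * sgrad g L k (x, v) := by
        intro k; ring
      rw [Finset.sum_congr rfl fun k _ => hterm k]
      simp only [Finset.sum_add_distrib, Finset.sum_sub_distrib, ← Finset.sum_mul]
      try rw [← hSdef]
    rw [hexp, fact0, ← hPdef] at hsum
    have h6 : w ^ 2 * (l2 * P / w ^ 2) = l2 * P := by field_simp
    have h7 : P * (l1 / w) - w ^ 2 * (l1 * P / w ^ 3) = 0 := by field_simp; try ring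
    have h8 : w ^ 2 * (S' / w) = w * S' := by field_simp; try ring
    linarith [hsum, h6, h7, h8]
  have hPv : P = (S - w * S') / l2 := by
    rw [eq_div_iff hl2]; linarith [hP]
  -- rewrite the target sums
  have ht1 : ∑ s, (sgrad g Lp s (x, v) / l2 - sgrad g L s (x, v) / (w * l2))
        * (v s * lower g x v r / w)
      = S' * (lower g x v r / (w * l2)) - S * (lower g x v r / (w ^ 2 * l2)) := by
    have hterm : ∀ s, (sgrad g Lp s (x, v) / l2 - sgrad g L s (x, v) / (w * l2))
          * (v s * lower g x v r / w)
        = (v s * sgrad g Lp s (x, v)) * (lower g x v r / (w * l2))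
          - (v s * sgrad g L s (x, v)) * (lower g x v r / (w ^ 2 * l2)) := by
      intro s; field_simp; try ring
    rw [Finset.sum_congr rfl fun s _ => hterm s]
    simp only [Finset.sum_sub_distrib, ← Finset.sum_mul]
    try rw [← hSdef, ← hS'def]
  have ht2 : ∑ s, (sgrad g L s (x, v) / l1)
        * (v s * lower g x v r / w ^ 2 - if s = r then 1 else 0)
      = S * (lower g x v r / (w ^ 2 * l1)) - sgrad g L r (x, v) / l1 := by
    have hterm : ∀ s, (sgrad g L s (x, v) / l1)
          * (v s * lower g x v r / w ^ 2 - if s = r then 1 else 0)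
        = (v s * sgrad g L s (x, v)) * (lower g x v r / (w ^ 2 * l1))
          - (if s = r then sgrad g L s (x, v) / l1 else 0) := by
      intro s; split_ifs with h <;> field_simp <;> try ring
    rw [Finset.sum_congr rfl fun s _ => hterm s]
    simp only [Finset.sum_sub_distrib, ← Finset.sum_mul]
    rw [← hSdef, Finset.sum_ite_eq' Finset.univ r (fun s => sgrad g L s (x, v) / l1),
      if_pos (Finset.mem_univ r)]
  rw [ht1, ht2]
  -- solve the r-th equation for F_r
  have h5 : l1 / w * F r (x, v)
      = sgrad g L r (x, v) - l2 * lower g x v r * P / w ^ 2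
        + l1 * lower g x v r * P / w ^ 3 - S' * (lower g x v r / w) := by
    linarith [eqk r]
  have hFr : F r (x, v) = (w / l1) * (l1 / w * F r (x, v)) := by
    field_simp
    try ring
  rw [hFr, h5, hPv]
  field_simp
  ring
end
end
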